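/- For every point P = (ρ₁ e^{iθ₁}, ρ₂ e^{iθ₂}) ∈ ℂ² with ρ₁, ρ₂ ≥ 0 and θ₁, θ₂ ∈ ℝ, the squared Euclidean distance from P to Γ equals dist(P, Γ)² = inf_{ρ > 0} [ (1/2)ρ² + (1/2)ρ^{−2} + ρ₁² + ρ₂² − √2 · √( ρ₁²ρ² + ρ₂²ρ^{−2} + 2ρ₁ρ₂ cos(θ₁ − θ₂) ) ]. -/

import Mathlib

/- STATEMENT 5: formula for the squared distance from an arbitrary point to Γ. -/

noncomputable section

open Complex Metric
open scoped Real

/-- ℂ² with the Euclidean (ℝ⁴) distance. -/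
abbrev C2 : Type := EuclideanSpace ℂ (Fin 2)

/-- The point (z, w) ∈ ℂ². -/
def pt (z w : ℂ) : C2 := (WithLp.equiv 2 (Fin 2 → ℂ)).symm ![z, w]

/-- The point of Γ with parameters (ρ, θ). -/
def gpt (ρ θ : ℝ) : C2 :=
  pt (((Real.sqrt 2 / 2 * ρ : ℝ) : ℂ) * Complex.exp ((θ : ℂ) * Complex.I))
     (((Real.sqrt 2 / 2 * ρ⁻¹ : ℝ) : ℂ) * Complex.exp ((θ : ℂ) * Complex.I))

/-- The special Lagrangian surface Γ ⊂ ℂ². -/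
def Gam : Set C2 := {p | ∃ ρ θ : ℝ, 0 < ρ ∧ p = gpt ρ θ}

/-- The point (ρ₁ e^{iθ₁}, ρ₂ e^{iθ₂}) ∈ ℂ². -/
def ppt (ρ₁ θ₁ ρ₂ θ₂ : ℝ) : C2 :=
  pt ((ρ₁ : ℂ) * Complex.exp ((θ₁ : ℂ) * Complex.I))
     ((ρ₂ : ℂ) * Complex.exp ((θ₂ : ℂ) * Complex.I))

set_option maxHeartbeats 2000000 in
lemma distsq_formula (ρ₁ ρ₂ θ₁ θ₂ ρ θ : ℝ) :
    dist (ppt ρ₁ θ₁ ρ₂ θ₂) (gpt ρ θ) ^ 2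
      = 1/2*ρ^2 + 1/2*(ρ^2)⁻¹ + ρ₁^2 + ρ₂^2
        - Real.sqrt 2 * (ρ*ρ₁*Real.cos (θ₁-θ) + ρ⁻¹*ρ₂*Real.cos (θ₂-θ)) := by
  have h2 : Real.sqrt 2 ^ 2 = 2 := Real.sq_sqrt (by norm_num)
  rw [EuclideanSpace.dist_eq, Real.sq_sqrt (by positivity)]
  have e0 : ∀ z w : ℂ, pt z w 0 = z := fun z w => rfl
  have e1 : ∀ z w : ℂ, pt z w 1 = w := fun z w => rfl
  simp only [Fin.sum_univ_two, ppt, gpt, e0, e1, Complex.dist_eq, Complex.sq_norm,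
    Complex.normSq_apply, Complex.sub_re, Complex.sub_im, Complex.mul_re, Complex.mul_im,
    Complex.ofReal_re, Complex.ofReal_im, Complex.exp_ofReal_mul_I_re, Complex.exp_ofReal_mul_I_im,
    Real.cos_sub]
  have p1 := Real.sin_sq_add_cos_sq θ
  have p2 := Real.sin_sq_add_cos_sq θ₁
  have p3 := Real.sin_sq_add_cos_sq θ₂
  linear_combination (ρ₁^2)*p2 + (ρ₂^2)*p3 + (Real.sqrt 2^2*(ρ^2+ρ⁻¹^2)/4)*p1 + ((ρ^2+ρ⁻¹^2)/4)*h2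

lemma re_formula (a b θ₁ θ₂ θ : ℝ) :
    (((a:ℂ)*Complex.exp ((θ₁:ℂ)*Complex.I) + (b:ℂ)*Complex.exp ((θ₂:ℂ)*Complex.I))
        * Complex.exp (((-θ:ℝ):ℂ)*Complex.I)).re
      = a*Real.cos (θ₁-θ) + b*Real.cos (θ₂-θ) := by
  simp only [add_mul, Complex.add_re, Complex.add_im, Complex.mul_re, Complex.mul_im,
    Complex.ofReal_re, Complex.ofReal_im, Complex.exp_ofReal_mul_I_re,
    Complex.exp_ofReal_mul_I_im, Real.cos_neg, Real.sin_neg, Real.cos_sub]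
  ring_nf

lemma csq (a b θ₁ θ₂ : ℝ) :
    ‖(a:ℂ)*Complex.exp ((θ₁:ℂ)*Complex.I) + (b:ℂ)*Complex.exp ((θ₂:ℂ)*Complex.I)‖ ^ 2
      = a^2 + b^2 + 2*a*b*Real.cos (θ₁-θ₂) := by
  rw [Complex.sq_norm, Complex.normSq_apply]
  simp only [Complex.add_re, Complex.add_im, Complex.mul_re, Complex.mul_im,
    Complex.ofReal_re, Complex.ofReal_im, Complex.exp_ofReal_mul_I_re,
    Complex.exp_ofReal_mul_I_im, Real.cos_sub]
  have p1 := Real.sin_sq_add_cos_sq θ₁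
  have p2 := Real.sin_sq_add_cos_sq θ₂
  linear_combination (a^2)*p1 + (b^2)*p2

lemma re_bound (a b θ₁ θ₂ θ : ℝ) :
    a*Real.cos (θ₁-θ) + b*Real.cos (θ₂-θ)
      ≤ ‖(a:ℂ)*Complex.exp ((θ₁:ℂ)*Complex.I) + (b:ℂ)*Complex.exp ((θ₂:ℂ)*Complex.I)‖ := by
  rw [← re_formula]
  refine (Complex.re_le_norm _).trans ?_
  rw [norm_mul, Complex.norm_exp]
  simp

lemma attain (a b θ₁ θ₂ : ℝ) :
    ∃ θ : ℝ, a*Real.cos (θ₁-θ) + b*Real.cos (θ₂-θ)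
      = ‖(a:ℂ)*Complex.exp ((θ₁:ℂ)*Complex.I) + (b:ℂ)*Complex.exp ((θ₂:ℂ)*Complex.I)‖ := by
  set c : ℂ := (a:ℂ)*Complex.exp ((θ₁:ℂ)*Complex.I) + (b:ℂ)*Complex.exp ((θ₂:ℂ)*Complex.I) with hc
  refine ⟨Complex.arg c, ?_⟩
  rw [← re_formula]
  have h := Complex.norm_mul_exp_arg_mul_I c
  have this1 : c * Complex.exp (((-Complex.arg c : ℝ):ℂ)*Complex.I) = ((‖c‖ : ℝ) : ℂ) := by
    calc c * Complex.exp (((-Complex.arg c : ℝ):ℂ)*Complex.I)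
        = (((‖c‖ : ℝ) : ℂ) * Complex.exp ((Complex.arg c : ℂ)*Complex.I))
            * Complex.exp (((-Complex.arg c : ℝ):ℂ)*Complex.I) := by rw [h]
      _ = ((‖c‖ : ℝ) : ℂ) * Complex.exp ((Complex.arg c : ℂ)*Complex.I + ((-Complex.arg c : ℝ):ℂ)*Complex.I) := by
            rw [mul_assoc, Complex.exp_add]
      _ = ((‖c‖ : ℝ) : ℂ) * Complex.exp 0 := by congr 1; push_cast; ring
      _ = ((‖c‖ : ℝ) : ℂ) := by simp
  rw [← hc, this1]
  simp

/-- The squared distance from P = (ρ₁ e^{iθ₁}, ρ₂ e^{iθ₂}) to Γ is the infimum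
over ρ > 0 of the explicit expression. -/
theorem sq_dist_to_Gamma (ρ₁ ρ₂ θ₁ θ₂ : ℝ) (h1 : 0 ≤ ρ₁) (h2 : 0 ≤ ρ₂) :
    (Metric.infDist (ppt ρ₁ θ₁ ρ₂ θ₂) Gam) ^ 2
      = sInf {v : ℝ | ∃ ρ : ℝ, 0 < ρ ∧
          v = (1/2) * ρ ^ 2 + (1/2) * (ρ ^ 2)⁻¹ + ρ₁ ^ 2 + ρ₂ ^ 2
            - Real.sqrt 2 * Real.sqrt (ρ₁ ^ 2 * ρ ^ 2 + ρ₂ ^ 2 * (ρ ^ 2)⁻¹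
                + 2 * ρ₁ * ρ₂ * Real.cos (θ₁ - θ₂))} := by
  set P := ppt ρ₁ θ₁ ρ₂ θ₂ with hP
  set g : ℝ → ℝ := fun ρ => (1/2) * ρ ^ 2 + (1/2) * (ρ ^ 2)⁻¹ + ρ₁ ^ 2 + ρ₂ ^ 2
            - Real.sqrt 2 * Real.sqrt (ρ₁ ^ 2 * ρ ^ 2 + ρ₂ ^ 2 * (ρ ^ 2)⁻¹
                + 2 * ρ₁ * ρ₂ * Real.cos (θ₁ - θ₂)) with hg
  set S : Set ℝ := {v : ℝ | ∃ ρ : ℝ, 0 < ρ ∧ v = g ρ} with hS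
  -- the square root in g equals |c ρ|
  have hsqrt : ∀ ρ : ℝ, 0 < ρ →
      Real.sqrt (ρ₁ ^ 2 * ρ ^ 2 + ρ₂ ^ 2 * (ρ ^ 2)⁻¹ + 2 * ρ₁ * ρ₂ * Real.cos (θ₁ - θ₂))
        = ‖((ρ*ρ₁ : ℝ):ℂ)*Complex.exp ((θ₁:ℂ)*Complex.I)
            + ((ρ⁻¹*ρ₂ : ℝ):ℂ)*Complex.exp ((θ₂:ℂ)*Complex.I)‖ := by
    intro ρ hρ
    have hne : ρ ≠ 0 := ne_of_gt hρ
    have := csq (ρ*ρ₁) (ρ⁻¹*ρ₂) θ₁ θ₂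
    have heq : ρ₁ ^ 2 * ρ ^ 2 + ρ₂ ^ 2 * (ρ ^ 2)⁻¹ + 2 * ρ₁ * ρ₂ * Real.cos (θ₁ - θ₂)
        = (ρ*ρ₁)^2 + (ρ⁻¹*ρ₂)^2 + 2*(ρ*ρ₁)*(ρ⁻¹*ρ₂)*Real.cos (θ₁-θ₂) := by
      field_simp
    rw [heq, ← this, Real.sqrt_sq (norm_nonneg _)]
  -- dist to a point of Γ in terms of the modulus
  have hdist : ∀ ρ θ : ℝ, 0 < ρ →
      dist P (gpt ρ θ) ^ 2
        = (1/2) * ρ ^ 2 + (1/2) * (ρ ^ 2)⁻¹ + ρ₁ ^ 2 + ρ₂ ^ 2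
          - Real.sqrt 2 * ((ρ*ρ₁)*Real.cos (θ₁-θ) + (ρ⁻¹*ρ₂)*Real.cos (θ₂-θ)) := by
    intro ρ θ hρ
    rw [hP, distsq_formula]
  have hs2 : (0:ℝ) ≤ Real.sqrt 2 := Real.sqrt_nonneg 2
  -- g ρ ≤ dist P (gpt ρ θ)^2
  have hle : ∀ ρ θ : ℝ, 0 < ρ → g ρ ≤ dist P (gpt ρ θ) ^ 2 := by
    intro ρ θ hρ
    rw [hdist ρ θ hρ, hg]
    simp only
    rw [hsqrt ρ hρ]
    have := re_bound (ρ*ρ₁) (ρ⁻¹*ρ₂) θ₁ θ₂ θ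
    nlinarith [this, hs2]
  -- g ρ is attained
  have hat : ∀ ρ : ℝ, 0 < ρ → ∃ θ : ℝ, dist P (gpt ρ θ) ^ 2 = g ρ := by
    intro ρ hρ
    obtain ⟨θ, hθ⟩ := attain (ρ*ρ₁) (ρ⁻¹*ρ₂) θ₁ θ₂
    refine ⟨θ, ?_⟩
    rw [hdist ρ θ hρ, hg]
    simp only
    rw [hsqrt ρ hρ, hθ]
  have hSne : S.Nonempty := ⟨g 1, 1, one_pos, rfl⟩
  have hGne : Gam.Nonempty := ⟨gpt 1 0, 1, 0, one_pos, rfl⟩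
  have hSpos : ∀ v ∈ S, (0:ℝ) ≤ v := by
    rintro v ⟨ρ, hρ, rfl⟩
    obtain ⟨θ, hθ⟩ := hat ρ hρ
    rw [← hθ]
    positivity
  have hSbdd : BddBelow S := ⟨0, hSpos⟩
  have h0S : (0:ℝ) ≤ sInf S := le_csInf hSne hSpos
  apply le_antisymm
  · -- infDist ^ 2 ≤ sInf S
    apply le_csInf hSne
    rintro v ⟨ρ, hρ, rfl⟩
    obtain ⟨θ, hθ⟩ := hat ρ hρ
    rw [← hθ]
    have hmem : gpt ρ θ ∈ Gam := ⟨ρ, θ, hρ, rfl⟩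
    exact pow_le_pow_left₀ Metric.infDist_nonneg (Metric.infDist_le_dist_of_mem hmem) 2
  · -- sInf S ≤ infDist ^ 2
    have hsq : Real.sqrt (sInf S) ≤ Metric.infDist P Gam := by
      by_contra hlt
      push_neg at hlt
      obtain ⟨q, hq, hd⟩ := (Metric.infDist_lt_iff hGne).mp hlt
      obtain ⟨ρ, θ, hρ, rfl⟩ := hq
      have h1' : sInf S ≤ dist P (gpt ρ θ) ^ 2 :=
        le_trans (csInf_le hSbdd ⟨ρ, hρ, rfl⟩) (hle ρ θ hρ)
      have h2' : Real.sqrt (sInf S) ≤ dist P (gpt ρ θ) := by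
        calc Real.sqrt (sInf S) ≤ Real.sqrt (dist P (gpt ρ θ) ^ 2) := Real.sqrt_le_sqrt h1'
          _ = dist P (gpt ρ θ) := Real.sqrt_sq dist_nonneg
      exact absurd hd (not_lt.mpr h2')
    calc sInf S = Real.sqrt (sInf S) ^ 2 := (Real.sq_sqrt h0S).symm
      _ ≤ Metric.infDist P Gam ^ 2 := pow_le_pow_left₀ (Real.sqrt_nonneg _) hsq 2

end
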